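/- Let n ≥ 2 and let σ, τ be distinct permutations of Fin n. The spanning subgraph of K_{n,n} with edge set M_σ ∪ M_τ is a Hamiltonian cycle of K_{n,n} if and only if the permutation σ⁻¹ ∘ τ is a single cycle whose support is all of Fin n (i.e., an n-cycle). -/

import Mathlib

open SimpleGraph

/-- The perfect matching of `K_{n,n}` associated with a permutation `σ` of `Fin n`:
its edge set is `{s(Sum.inl m, Sum.inr (σ m)) : m ∈ Fin n}`. -/
def matchingEdges (n : ℕ) (σ : Equiv.Perm (Fin n)) : Set (Sym2 (Fin n ⊕ Fin n)) :=
  {e | ∃ m : Fin n, e = s(Sum.inl m, Sum.inr (σ m))}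

namespace Stmt5Aux

open Sum Equiv Equiv.Perm SimpleGraph.Walk

lemma reach_rel {V : Type*} {G : SimpleGraph V} {R : V → V → Prop}
    (hrefl : ∀ a, R a a) (htrans : ∀ {a b c}, R a b → R b c → R a c)
    (hadj : ∀ {a b}, G.Adj a b → R a b) {u v : V} (h : G.Reachable u v) : R u v := by
  obtain ⟨p⟩ := h
  induction p with
  | nil => exact hrefl _
  | cons h p ih => exact htrans (hadj h) ih

variable {n : ℕ} (σ τ : Equiv.Perm (Fin n))

lemma sym2_eq_iff {a b c d : Fin n} :
    s((inl a : Fin n ⊕ Fin n), inr b) = s(inl c, inr d) ↔ a = c ∧ b = d := by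
  rw [Sym2.eq_iff]; simp

lemma adjLR (a b : Fin n) :
    (completeBipartiteGraph (Fin n) (Fin n)).Adj (inl a) (inr b) := by
  simp [completeBipartiteGraph]

lemma adjRL (a b : Fin n) :
    (completeBipartiteGraph (Fin n) (Fin n)).Adj (inr b) (inl a) := by
  simp [completeBipartiteGraph]

/-- The walk `inl (π^k x) — inr (σ (π^k x)) — inl (π^(k-1) x) — ⋯ — inl x`
where `π = σ⁻¹ * τ`. -/
def bwalk (x : Fin n) : (k : ℕ) →
    (completeBipartiteGraph (Fin n) (Fin n)).Walk (inl (((σ⁻¹ * τ) ^ k) x)) (inl x)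
  | 0 => Walk.nil.copy (by simp) rfl
  | (k+1) => Walk.cons (adjLR (((σ⁻¹ * τ) ^ (k+1)) x) (σ (((σ⁻¹ * τ) ^ (k+1)) x)))
      (Walk.cons (adjRL (((σ⁻¹ * τ) ^ k) x) (σ (((σ⁻¹ * τ) ^ (k+1)) x))) (bwalk x k))

lemma bwalk_support (x : Fin n) (k : ℕ) {a : Fin n ⊕ Fin n} :
    a ∈ (bwalk σ τ x k).support ↔
      (∃ i, i ≤ k ∧ a = inl (((σ⁻¹ * τ) ^ i) x)) ∨
      (∃ i, 0 < i ∧ i ≤ k ∧ a = inr (σ (((σ⁻¹ * τ) ^ i) x))) := by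
  induction k with
  | zero =>
    simp only [bwalk, support_copy, support_nil, List.mem_singleton, Nat.le_zero]
    constructor
    · rintro rfl; exact Or.inl ⟨0, rfl, by simp⟩
    · rintro (⟨i, rfl, rfl⟩ | ⟨i, h0, rfl, _⟩)
      · simp
      · omega
  | succ k ih =>
    simp only [bwalk, support_cons, List.mem_cons, ih]
    constructor
    · rintro (rfl | rfl | (⟨i, hi, rfl⟩ | ⟨i, h0, hi, rfl⟩))
      · exact Or.inl ⟨k+1, le_refl _, rfl⟩
      · exact Or.inr ⟨k+1, Nat.succ_pos _, le_refl _, rfl⟩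
      · exact Or.inl ⟨i, hi.trans (Nat.le_succ _), rfl⟩
      · exact Or.inr ⟨i, h0, hi.trans (Nat.le_succ _), rfl⟩
    · rintro (⟨i, hi, rfl⟩ | ⟨i, h0, hi, rfl⟩)
      · rcases Nat.eq_or_lt_of_le hi with rfl | hlt
        · exact Or.inl rfl
        · exact Or.inr (Or.inr (Or.inl ⟨i, Nat.lt_succ_iff.mp hlt, rfl⟩))
      · rcases Nat.eq_or_lt_of_le hi with rfl | hlt
        · exact Or.inr (Or.inl rfl)
        · exact Or.inr (Or.inr (Or.inr ⟨i, h0, Nat.lt_succ_iff.mp hlt, rfl⟩))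

lemma bwalk_edges (x : Fin n) (k : ℕ) {e : Sym2 (Fin n ⊕ Fin n)} :
    e ∈ (bwalk σ τ x k).edges ↔
      (∃ i, 0 < i ∧ i ≤ k ∧ e = s(inl (((σ⁻¹ * τ) ^ i) x), inr (σ (((σ⁻¹ * τ) ^ i) x)))) ∨
      (∃ i, i < k ∧ e = s(inl (((σ⁻¹ * τ) ^ i) x), inr (σ (((σ⁻¹ * τ) ^ (i+1)) x)))) := by
  induction k with
  | zero =>
    simp only [bwalk, edges_copy, edges_nil, List.not_mem_nil, false_iff]
    rintro (⟨i, h0, hi, _⟩ | ⟨i, hi, _⟩) <;> omega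
  | succ k ih =>
    simp only [bwalk, edges_cons, List.mem_cons, ih]
    rw [show s((inr (σ (((σ⁻¹ * τ) ^ (k+1)) x)) : Fin n ⊕ Fin n), inl (((σ⁻¹ * τ) ^ k) x))
        = s(inl (((σ⁻¹ * τ) ^ k) x), inr (σ (((σ⁻¹ * τ) ^ (k+1)) x))) from Sym2.eq_swap]
    constructor
    · rintro (rfl | rfl | (⟨i, h0, hi, rfl⟩ | ⟨i, hi, rfl⟩))
      · exact Or.inl ⟨k+1, Nat.succ_pos _, le_refl _, rfl⟩
      · exact Or.inr ⟨k, Nat.lt_succ_self _, rfl⟩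
      · exact Or.inl ⟨i, h0, hi.trans (Nat.le_succ _), rfl⟩
      · exact Or.inr ⟨i, hi.trans (Nat.lt_succ_self _), rfl⟩
    · rintro (⟨i, h0, hi, rfl⟩ | ⟨i, hi, rfl⟩)
      · rcases Nat.eq_or_lt_of_le hi with rfl | hlt
        · exact Or.inl rfl
        · exact Or.inr (Or.inr (Or.inl ⟨i, h0, Nat.lt_succ_iff.mp hlt, rfl⟩))
      · rcases Nat.eq_or_lt_of_le (Nat.lt_succ_iff.mp hi) with rfl | hlt
        · exact Or.inr (Or.inl rfl)
        · exact Or.inr (Or.inr (Or.inr ⟨i, hlt, rfl⟩))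

lemma bwalk_length (x : Fin n) (k : ℕ) : (bwalk σ τ x k).length = 2 * k := by
  induction k with
  | zero => simp [bwalk]
  | succ k ih => simp [bwalk, ih]; omega


lemma support_nodup (x : Fin n) (hne : ∀ y, (σ⁻¹ * τ) y ≠ y)
    (hinj : ∀ i j, i ≤ j → j - i < n →
      ((σ⁻¹ * τ) ^ i) x = ((σ⁻¹ * τ) ^ j) x → i = j) :
    ∀ k, k < n → ((bwalk σ τ x k).support).Nodup := by
  intro k
  induction k with
  | zero => intro _; simp [bwalk]
  | succ k ih =>
    intro hk
    have ihk := ih (by omega)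
    simp only [bwalk, support_cons, List.nodup_cons, List.mem_cons]
    refine ⟨?_, ?_, ihk⟩
    · rintro (h | h)
      · exact absurd h (by simp)
      · rcases (bwalk_support σ τ x k).mp h with ⟨i, hi, hEq⟩ | ⟨i, h0, hi, hEq⟩
        · have h2 : ((σ⁻¹ * τ) ^ (k+1)) x = ((σ⁻¹ * τ) ^ i) x := Sum.inl.inj hEq
          have := hinj i (k+1) (by omega) (by omega) h2.symm
          omega
        · simp at hEq
    · intro h
      rcases (bwalk_support σ τ x k).mp h with ⟨i, hi, hEq⟩ | ⟨i, h0, hi, hEq⟩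
      · simp at hEq
      · have h2 : σ (((σ⁻¹ * τ) ^ (k+1)) x) = σ (((σ⁻¹ * τ) ^ i) x) := Sum.inr.inj hEq
        have h3 : ((σ⁻¹ * τ) ^ i) x = ((σ⁻¹ * τ) ^ (k+1)) x := (σ.injective h2).symm
        have := hinj i (k+1) (by omega) (by omega) h3
        omega

lemma edges_nodup (x : Fin n) (hne : ∀ y, (σ⁻¹ * τ) y ≠ y)
    (hinj : ∀ i j, i ≤ j → j - i < n →
      ((σ⁻¹ * τ) ^ i) x = ((σ⁻¹ * τ) ^ j) x → i = j) :
    ∀ k, k ≤ n → ((bwalk σ τ x k).edges).Nodup := by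
  intro k
  induction k with
  | zero => intro _; simp [bwalk]
  | succ k ih =>
    intro hk
    have ihk := ih (by omega)
    simp only [bwalk, edges_cons, List.nodup_cons, List.mem_cons]
    rw [show s((inr (σ (((σ⁻¹ * τ) ^ (k+1)) x)) : Fin n ⊕ Fin n), inl (((σ⁻¹ * τ) ^ k) x))
        = s(inl (((σ⁻¹ * τ) ^ k) x), inr (σ (((σ⁻¹ * τ) ^ (k+1)) x))) from Sym2.eq_swap]
    refine ⟨?_, ?_, ihk⟩
    · rintro (h | h)
      · obtain ⟨h1, -⟩ := sym2_eq_iff.mp h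
        refine hne (((σ⁻¹ * τ) ^ k) x) ?_
        rw [pow_succ', Equiv.Perm.mul_apply] at h1
        exact h1
      · rcases (bwalk_edges σ τ x k).mp h with ⟨i, h0, hi, hEq⟩ | ⟨i, hi, hEq⟩
        · obtain ⟨h1, -⟩ := sym2_eq_iff.mp hEq
          have := hinj i (k+1) (by omega) (by omega) h1.symm
          omega
        · obtain ⟨-, h2⟩ := sym2_eq_iff.mp hEq
          have h3 : ((σ⁻¹ * τ) ^ (k+1)) x = ((σ⁻¹ * τ) ^ (i+1)) x := σ.injective h2
          have := hinj (i+1) (k+1) (by omega) (by omega) h3.symm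
          omega
    · intro h
      rcases (bwalk_edges σ τ x k).mp h with ⟨i, h0, hi, hEq⟩ | ⟨i, hi, hEq⟩
      · obtain ⟨h1, h2⟩ := sym2_eq_iff.mp hEq
        have h3 : ((σ⁻¹ * τ) ^ (k+1)) x = ((σ⁻¹ * τ) ^ i) x := σ.injective h2
        refine hne (((σ⁻¹ * τ) ^ k) x) ?_
        rw [← h1] at h3
        rw [pow_succ', Equiv.Perm.mul_apply] at h3
        exact h3
      · obtain ⟨h1, -⟩ := sym2_eq_iff.mp hEq
        have := hinj i k (by omega) (by omega) h1.symm
        omega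

end Stmt5Aux

/-- For distinct permutations `σ, τ` of `Fin n` (`n ≥ 2`), the spanning subgraph of
`K_{n,n}` with edge set `M_σ ∪ M_τ` is a Hamiltonian cycle of `K_{n,n}` iff the
permutation `σ⁻¹ ∘ τ` is a single cycle whose support is all of `Fin n`. -/
theorem stmt5 (n : ℕ) (hn : 2 ≤ n) (σ τ : Equiv.Perm (Fin n)) (hστ : σ ≠ τ) :
    (∃ (v : Fin n ⊕ Fin n)
        (w : (completeBipartiteGraph (Fin n) (Fin n)).Walk v v),
      w.IsHamiltonianCycle ∧
        {e | e ∈ w.edges} = matchingEdges n σ ∪ matchingEdges n τ) ↔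
      ((σ⁻¹ * τ).IsCycle ∧ (σ⁻¹ * τ).support = Finset.univ) := by
  constructor
  · rintro ⟨v, w, hw, hedge⟩
    -- every adjacency in the cycle subgraph relates left labels by `SameCycle`
    have hstep : ∀ u u' : Fin n ⊕ Fin n, w.toSubgraph.Adj u u' →
        (σ⁻¹ * τ).SameCycle (Sum.elim id (fun b => σ⁻¹ b) u)
          (Sum.elim id (fun b => σ⁻¹ b) u') := by
      intro u u' h
      have he : s(u, u') ∈ matchingEdges n σ ∪ matchingEdges n τ := by
        rw [← hedge]
        exact (w.mem_edges_toSubgraph).mp (SimpleGraph.Subgraph.mem_edgeSet.mpr h)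
      rcases he with ⟨m, hm⟩ | ⟨m, hm⟩
      · rcases Sym2.eq_iff.mp hm with ⟨rfl, rfl⟩ | ⟨rfl, rfl⟩ <;>
          simp [Equiv.Perm.SameCycle.rfl]
      · rcases Sym2.eq_iff.mp hm with ⟨rfl, rfl⟩ | ⟨rfl, rfl⟩
        · exact ⟨1, by simp [Equiv.Perm.mul_apply]⟩
        · exact ⟨-1, by simp [Equiv.Perm.mul_apply]⟩
    have hall : ∀ a b : Fin n, (σ⁻¹ * τ).SameCycle a b := by
      intro a b
      have ha : (Sum.inl a : Fin n ⊕ Fin n) ∈ w.toSubgraph.verts :=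
        (w.mem_verts_toSubgraph).mpr (hw.mem_support _)
      have hb : (Sum.inl b : Fin n ⊕ Fin n) ∈ w.toSubgraph.verts :=
        (w.mem_verts_toSubgraph).mpr (hw.mem_support _)
      have hreach := (w.toSubgraph_connected).preconnected ⟨_, ha⟩ ⟨_, hb⟩
      have := Stmt5Aux.reach_rel
        (R := fun (p q : w.toSubgraph.verts) =>
          (σ⁻¹ * τ).SameCycle (Sum.elim id (fun b => σ⁻¹ b) p.1)
            (Sum.elim id (fun b => σ⁻¹ b) q.1))
        (fun _ => Equiv.Perm.SameCycle.rfl)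
        (fun h h' => h.trans h')
        (fun h => hstep _ _ h) hreach
      simpa using this
    have hfix : ∀ y, (σ⁻¹ * τ) y ≠ y := by
      intro y hy
      obtain ⟨z, hz⟩ := Fintype.exists_ne_of_one_lt_card (by simp; omega) y
      obtain ⟨i, hi⟩ := hall y z
      rw [Equiv.Perm.zpow_apply_eq_self_of_apply_eq_self hy] at hi
      exact hz hi.symm
    have y0 : Fin n := ⟨0, by omega⟩
    exact ⟨⟨y0, hfix y0, fun b _ => hall y0 b⟩,
      Finset.eq_univ_iff_forall.mpr fun y => Equiv.Perm.mem_support.mpr (hfix y)⟩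
  · rintro ⟨hc, hs⟩
    obtain ⟨m, rfl⟩ : ∃ m, n = m + 1 := ⟨n - 1, by omega⟩
    have hne : ∀ y, (σ⁻¹ * τ) y ≠ y := fun y =>
      Equiv.Perm.mem_support.mp (hs ▸ Finset.mem_univ y)
    have horder : orderOf (σ⁻¹ * τ) = m + 1 := by
      rw [hc.orderOf, hs, Finset.card_univ, Fintype.card_fin]
    have hpow : (σ⁻¹ * τ) ^ (m + 1) = 1 := by
      have h := pow_orderOf_eq_one (σ⁻¹ * τ)
      rwa [horder] at h
    set x : Fin (m + 1) := ⟨0, by omega⟩ with hxdef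
    have hfix0 : ∀ k, k < m + 1 → ((σ⁻¹ * τ) ^ k) x = x → k = 0 := by
      intro k hk h
      have h1 : (σ⁻¹ * τ) ^ k = 1 := (hc.pow_eq_one_iff' (hne x)).mpr h
      have h2 := orderOf_dvd_of_pow_eq_one h1
      rw [horder] at h2
      rcases Nat.eq_zero_or_pos k with rfl | hpos
      · rfl
      · exact absurd (Nat.le_of_dvd hpos h2) (by omega)
    have hinj : ∀ i j, i ≤ j → j - i < m + 1 →
        ((σ⁻¹ * τ) ^ i) x = ((σ⁻¹ * τ) ^ j) x → i = j := by
      intro i j hij hd h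
      have h1 : ((σ⁻¹ * τ) ^ i) (((σ⁻¹ * τ) ^ (j - i)) x) = ((σ⁻¹ * τ) ^ i) x := by
        rw [← Equiv.Perm.mul_apply, ← pow_add, show i + (j - i) = j from by omega]
        exact h.symm
      have h2 := hfix0 _ hd ((Equiv.injective _) h1)
      omega
    have hxn : ((σ⁻¹ * τ) ^ (m + 1)) x = x := by
      rw [hpow]; rfl
    have horbit : ∀ b : Fin (m + 1), ∃ i, i < m + 1 ∧ ((σ⁻¹ * τ) ^ i) x = b := by
      intro b
      have hsc : (σ⁻¹ * τ).SameCycle x b := hc.exists_zpow_eq (hne x) (hne b)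
      obtain ⟨i, hilt, hieq⟩ := hsc.exists_pow_eq'
      rw [horder] at hilt
      exact ⟨i, hilt, hieq⟩
    have hστid : ∀ i : ℕ, σ (((σ⁻¹ * τ) ^ (i + 1)) x) = τ (((σ⁻¹ * τ) ^ i) x) := by
      intro i
      rw [pow_succ']
      simp [Equiv.Perm.mul_apply]
    refine ⟨Sum.inl x, (Stmt5Aux.bwalk σ τ x (m + 1)).copy (by rw [hxn]) rfl, ?_, ?_⟩
    · -- Hamiltonian cycle
      have htail_eq : ((Stmt5Aux.bwalk σ τ x (m + 1)).copy (by rw [hxn]) rfl).support.tail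
          = Sum.inr (σ (((σ⁻¹ * τ) ^ (m + 1)) x)) :: (Stmt5Aux.bwalk σ τ x m).support := by
        simp [Stmt5Aux.bwalk]
      have htail_nd : (((Stmt5Aux.bwalk σ τ x (m + 1)).copy
          (by rw [hxn]) rfl).support.tail).Nodup := by
        rw [htail_eq]
        refine List.nodup_cons.mpr ⟨?_, Stmt5Aux.support_nodup σ τ x hne hinj m (by omega)⟩
        intro h
        rcases (Stmt5Aux.bwalk_support σ τ x m).mp h with ⟨i, hi, hEq⟩ | ⟨i, h0, hi, hEq⟩
        · simp at hEq
        · have h2 : ((σ⁻¹ * τ) ^ (m + 1)) x = ((σ⁻¹ * τ) ^ i) x :=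
            σ.injective (Sum.inr.inj hEq)
          rw [hxn] at h2
          have := hfix0 i (by omega) h2.symm
          omega
      have htail_mem : ∀ a : Fin (m + 1) ⊕ Fin (m + 1),
          a ∈ ((Stmt5Aux.bwalk σ τ x (m + 1)).copy (by rw [hxn]) rfl).support.tail := by
        intro a
        rw [htail_eq, List.mem_cons]
        rcases a with b | b
        · obtain ⟨i, hilt, hieq⟩ := horbit b
          exact Or.inr ((Stmt5Aux.bwalk_support σ τ x m).mpr
            (Or.inl ⟨i, by omega, by rw [hieq]⟩))
        · obtain ⟨i, hilt, hieq⟩ := horbit (σ⁻¹ b)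
          rcases Nat.eq_zero_or_pos i with rfl | hpos
          · left
            have hxb : x = σ⁻¹ b := by simpa using hieq
            rw [hxn, hxb]
            simp
          · right
            refine (Stmt5Aux.bwalk_support σ τ x m).mpr
              (Or.inr ⟨i, hpos, by omega, ?_⟩)
            rw [hieq]
            simp
      rw [SimpleGraph.Walk.isHamiltonianCycle_iff_isCycle_and_support_count_tail_eq_one]
      constructor
      · refine ⟨⟨⟨?_⟩, ?_⟩, htail_nd⟩
        · rw [SimpleGraph.Walk.edges_copy]
          exact Stmt5Aux.edges_nodup σ τ x hne hinj (m + 1) le_rfl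
        · intro h
          have := congrArg SimpleGraph.Walk.length h
          rw [SimpleGraph.Walk.length_copy, Stmt5Aux.bwalk_length] at this
          simp at this
      · intro a
        exact @List.count_eq_one_of_mem _ instBEqOfDecidableEq _ _ _ htail_nd (htail_mem a)
    · -- edge set equality
      ext e
      simp only [Set.mem_setOf_eq, SimpleGraph.Walk.edges_copy,
        Stmt5Aux.bwalk_edges]
      constructor
      · rintro (⟨i, h0, hi, rfl⟩ | ⟨i, hi, rfl⟩)
        · exact Or.inl ⟨_, rfl⟩
        · exact Or.inr ⟨((σ⁻¹ * τ) ^ i) x, by rw [hστid i]⟩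
      · rintro (⟨b, rfl⟩ | ⟨b, rfl⟩)
        · obtain ⟨i, hilt, hieq⟩ := horbit b
          rcases Nat.eq_zero_or_pos i with rfl | hpos
          · refine Or.inl ⟨m + 1, by omega, le_rfl, ?_⟩
            have : x = b := by simpa using hieq
            rw [hxn, this]
          · exact Or.inl ⟨i, hpos, by omega, by rw [hieq]⟩
        · obtain ⟨i, hilt, hieq⟩ := horbit b
          refine Or.inr ⟨i, hilt, ?_⟩
          rw [hστid i, hieq]
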